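/- Let α, β > 0 and let X, Y be independent centered Gaussian random variables with variances σ₁² > 0 and σ₂² > 0, respectively. Then E[p_α(X) p_β(X + Y)] = (2π)^{−1} ((α + σ₁²)(β + σ₂²) + α σ₁²)^{−1/2}. -/

import Mathlib

open MeasureTheory ProbabilityTheory Real

/-- The Gaussian kernel `p_ε(x) = (2πε)^{-1/2} exp(-x²/(2ε))`. -/
noncomputable def gaussKer (ε : ℝ) (x : ℝ) : ℝ :=
  (Real.sqrt (2 * Real.pi * ε))⁻¹ * Real.exp (-x ^ 2 / (2 * ε))

lemma gaussKer_nonneg (ε x : ℝ) : 0 ≤ gaussKer ε x := by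
  unfold gaussKer; positivity

lemma gaussKer_le {ε : ℝ} (hε : 0 < ε) (x : ℝ) : gaussKer ε x ≤ (Real.sqrt (2*π*ε))⁻¹ := by
  unfold gaussKer
  nth_rewrite 2 [← mul_one (Real.sqrt (2*π*ε))⁻¹]
  gcongr
  refine Real.exp_le_one_iff.2 (div_nonpos_of_nonpos_of_nonneg ?_ ?_)
  · nlinarith [sq_nonneg x]
  · positivity

lemma continuous_gaussKer (ε : ℝ) : Continuous (gaussKer ε) := by
  unfold gaussKer; fun_prop

lemma integral_exp_shift (k c : ℝ) (hk : 0 < k) :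
    ∫ y : ℝ, Real.exp (-(k/2) * (y + c)^2) = Real.sqrt (2*π/k) := by
  rw [integral_add_right_eq_self (fun y => Real.exp (-(k/2)*y^2)) c,
    integral_gaussian]
  congr 1
  field_simp

lemma gaussKer_conv (b t x : ℝ) (hb : 0 < b) (ht : 0 < t) :
    ∫ y : ℝ, gaussKer t y * gaussKer b (x + y) = gaussKer (b + t) x := by
  have hbt : 0 < b + t := by linarith
  set k := (b+t)/(b*t) with hk
  have hkpos : 0 < k := by positivity
  have key : ∀ y : ℝ, gaussKer t y * gaussKer b (x+y)
      = ((Real.sqrt (2*π*t))⁻¹ * (Real.sqrt (2*π*b))⁻¹ * Real.exp (-x^2/(2*(b+t)))) *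
        Real.exp (-(k/2) * (y + x*t/(b+t))^2) := by
    intro y
    have e1 : Real.exp (-y ^ 2 / (2 * t)) * Real.exp (-(x + y) ^ 2 / (2 * b))
        = Real.exp (-x^2/(2*(b+t))) * Real.exp (-(k/2)*(y + x*t/(b+t))^2) := by
      rw [← Real.exp_add, ← Real.exp_add]
      congr 1
      rw [hk]; field_simp; ring
    unfold gaussKer
    rw [mul_mul_mul_comm, e1]; ring
  simp_rw [key]
  rw [integral_const_mul, integral_exp_shift _ _ hkpos]
  unfold gaussKer
  rw [← Real.sqrt_inv, ← Real.sqrt_inv, ← Real.sqrt_inv, ← Real.sqrt_mul (by positivity)]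
  rw [mul_assoc, mul_comm (rexp _), ← mul_assoc, ← Real.sqrt_mul (by positivity)]
  congr 2
  rw [hk]; field_simp

lemma gaussKer_triple (a m s : ℝ) (ha : 0 < a) (hm : 0 < m) (hs : 0 < s) :
    ∫ x : ℝ, gaussKer s x * (gaussKer a x * gaussKer m x)
      = (2*π)⁻¹ * (Real.sqrt (m*s + a*s + a*m))⁻¹ := by
  set K := (m*s + a*s + a*m)/(a*m*s) with hKdef
  have hK : 0 < K := by positivity
  have key : ∀ x : ℝ, gaussKer s x * (gaussKer a x * gaussKer m x)
      = ((Real.sqrt (2*π*s))⁻¹ * (Real.sqrt (2*π*a))⁻¹ * (Real.sqrt (2*π*m))⁻¹) *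
        Real.exp (-(K/2) * (x + 0)^2) := by
    intro x
    have e : Real.exp (-x^2/(2*s)) * (Real.exp (-x^2/(2*a)) * Real.exp (-x^2/(2*m)))
        = Real.exp (-(K/2)*(x+0)^2) := by
      rw [← Real.exp_add, ← Real.exp_add]
      congr 1
      rw [hKdef]; field_simp; ring
    calc gaussKer s x * (gaussKer a x * gaussKer m x)
        = ((Real.sqrt (2*π*s))⁻¹ * (Real.sqrt (2*π*a))⁻¹ * (Real.sqrt (2*π*m))⁻¹) *
          (Real.exp (-x^2/(2*s)) * (Real.exp (-x^2/(2*a)) * Real.exp (-x^2/(2*m)))) := by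
          unfold gaussKer; ring
      _ = _ := by rw [e]
  simp_rw [key]
  rw [integral_const_mul, integral_exp_shift _ _ hK]
  have h2π : (2*π)⁻¹ = Real.sqrt (((2*π)^2)⁻¹) := by
    rw [Real.sqrt_inv, Real.sqrt_sq (by positivity)]
  rw [← Real.sqrt_inv, ← Real.sqrt_inv, ← Real.sqrt_inv, ← Real.sqrt_mul (by positivity),
    ← Real.sqrt_mul (by positivity), ← Real.sqrt_mul (by positivity),
    ← Real.sqrt_inv (m*s + a*s + a*m), h2π, ← Real.sqrt_mul (by positivity)]
  congr 1
  rw [hKdef]; field_simp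

lemma integral_gaussianReal_eq (σ : ℝ) (hσ : 0 < σ) (f : ℝ → ℝ) :
    ∫ x, f x ∂(gaussianReal 0 (Real.toNNReal (σ^2))) = ∫ x, gaussKer (σ^2) x * f x := by
  have hv : (Real.toNNReal (σ^2)) ≠ 0 := by
    intro h
    exact absurd (Real.toNNReal_eq_zero.mp h) (not_le.2 (by positivity))
  rw [gaussianReal_of_var_ne_zero _ hv, gaussianPDF_def]
  rw [show (fun x => ENNReal.ofReal (gaussianPDFReal 0 (Real.toNNReal (σ^2)) x))
      = (fun x => ((Real.toNNReal (gaussianPDFReal 0 (Real.toNNReal (σ^2)) x) : NNReal) : ENNReal))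
      from rfl]
  rw [integral_withDensity_eq_integral_smul ((measurable_gaussianPDFReal _ _).real_toNNReal) f]
  congr 1 with x
  rw [NNReal.smul_def, smul_eq_mul, Real.coe_toNNReal _ (gaussianPDFReal_nonneg _ _ _)]
  congr 1
  unfold gaussianPDFReal gaussKer
  rw [Real.coe_toNNReal _ (by positivity : (0:ℝ) ≤ σ^2), sub_zero]

theorem stmt12 {Ω : Type*} [MeasurableSpace Ω] (P : Measure Ω) [IsProbabilityMeasure P]
    (X Y : Ω → ℝ) (hXmeas : Measurable X) (hYmeas : Measurable Y)
    (α β σ₁ σ₂ : ℝ) (hα : 0 < α) (hβ : 0 < β) (hσ₁ : 0 < σ₁) (hσ₂ : 0 < σ₂)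
    (hX : Measure.map X P = gaussianReal 0 (Real.toNNReal (σ₁ ^ 2)))
    (hY : Measure.map Y P = gaussianReal 0 (Real.toNNReal (σ₂ ^ 2)))
    (hind : IndepFun X Y P) :
    ∫ ω, gaussKer α (X ω) * gaussKer β (X ω + Y ω) ∂P
      = (2 * Real.pi)⁻¹ *
        ((α + σ₁ ^ 2) * (β + σ₂ ^ 2) + α * σ₁ ^ 2) ^ (-(1:ℝ)/2) := by
  set μ1 := gaussianReal 0 (Real.toNNReal (σ₁ ^ 2)) with hμ1
  set μ2 := gaussianReal 0 (Real.toNNReal (σ₂ ^ 2)) with hμ2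
  have hjoint : Measure.map (fun ω => (X ω, Y ω)) P = μ1.prod μ2 := by
    rw [← hX, ← hY]
    exact (indepFun_iff_map_prod_eq_prod_map_map hXmeas.aemeasurable
      hYmeas.aemeasurable).mp hind
  have hFcont : Continuous (fun p : ℝ × ℝ => gaussKer α p.1 * gaussKer β (p.1 + p.2)) :=
    ((continuous_gaussKer α).comp continuous_fst).mul
      ((continuous_gaussKer β).comp (continuous_fst.add continuous_snd))
  have hFmeas := hFcont.aestronglyMeasurable (μ := μ1.prod μ2)
  have step1 : ∫ ω, gaussKer α (X ω) * gaussKer β (X ω + Y ω) ∂P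
      = ∫ p : ℝ × ℝ, gaussKer α p.1 * gaussKer β (p.1 + p.2) ∂(μ1.prod μ2) := by
    rw [← hjoint]
    exact (integral_map (hXmeas.prodMk hYmeas).aemeasurable
      (by rw [hjoint]; exact hFmeas)).symm
  rw [step1]
  have hInt : Integrable (fun p : ℝ × ℝ => gaussKer α p.1 * gaussKer β (p.1 + p.2))
      (μ1.prod μ2) := by
    refine Integrable.mono'
      (integrable_const ((Real.sqrt (2*π*α))⁻¹ * (Real.sqrt (2*π*β))⁻¹)) hFmeas ?_
    filter_upwards with p
    rw [Real.norm_eq_abs,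
      abs_of_nonneg (mul_nonneg (gaussKer_nonneg _ _) (gaussKer_nonneg _ _))]
    exact mul_le_mul (gaussKer_le hα _) (gaussKer_le hβ _) (gaussKer_nonneg _ _)
      (by positivity)
  rw [integral_prod _ hInt]
  have inner : ∀ x : ℝ, ∫ y, gaussKer α x * gaussKer β (x + y) ∂μ2
      = gaussKer α x * gaussKer (β + σ₂^2) x := by
    intro x
    rw [hμ2, integral_gaussianReal_eq σ₂ hσ₂]
    simp_rw [show ∀ y : ℝ, gaussKer (σ₂^2) y * (gaussKer α x * gaussKer β (x+y))
      = gaussKer α x * (gaussKer (σ₂^2) y * gaussKer β (x+y)) from fun y => by ring]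
    rw [integral_const_mul, gaussKer_conv β (σ₂^2) x hβ (by positivity)]
  simp_rw [inner]
  rw [hμ1, integral_gaussianReal_eq σ₁ hσ₁,
    gaussKer_triple α (β + σ₂^2) (σ₁^2) hα (by positivity) (by positivity)]
  congr 1
  have hD : (0:ℝ) < (α + σ₁ ^ 2) * (β + σ₂ ^ 2) + α * σ₁ ^ 2 := by positivity
  rw [show (β + σ₂^2)*(σ₁^2) + α*(σ₁^2) + α*(β + σ₂^2)
    = (α + σ₁ ^ 2) * (β + σ₂ ^ 2) + α * σ₁ ^ 2 by ring]
  rw [show (-(1:ℝ)/2) = -(1/2) by ring, Real.rpow_neg hD.le, ← Real.sqrt_eq_rpow]
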